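/- Let φ be analytic on the unit disk 𝔻 with φ(0) = 1, and define A(s) = sup_{|z|=s} |2zφ'(z) + 1 − φ(z)²|, B(s) = sup_{|z|=s} |φ'(z)|, F(s,t) = ((1−t²)²/(2t²)) A(s) + (1−t²)(1 − s²/t²) B(s), and N(φ) = sup_{0<s<t<1} F(s,t). If f is analytic on 𝔻 with f(0)=0, f'(0)=1, f' nonvanishing, and 1 + z f''(z)/f'(z) is subordinate to φ (i.e. equals φ(ω(z)) for some analytic ω : 𝔻 → 𝔻 with ω(0)=0), then ‖S_f‖ = sup_{z∈𝔻} (1−|z|²)² |S_f(z)| ≤ N(φ). -/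

import Mathlib

open Metric Complex
open scoped ENNReal



open Metric
open scoped ENNReal

/-- `A(s) = sup_{|z|=s} |2 z φ'(z) + 1 - φ(z)²|`, as an extended real number. -/
noncomputable def schwarzA (φ : ℂ → ℂ) (s : ℝ) : ℝ≥0∞ :=
  ⨆ z ∈ {z : ℂ | ‖z‖ = s},
    ENNReal.ofReal ‖2 * z * deriv φ z + 1 - φ z ^ 2‖

/-- `B(s) = sup_{|z|=s} |φ'(z)|`, as an extended real number. -/
noncomputable def schwarzB (φ : ℂ → ℂ) (s : ℝ) : ℝ≥0∞ :=
  ⨆ z ∈ {z : ℂ | ‖z‖ = s}, ENNReal.ofReal ‖deriv φ z‖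

/-- `F(s,t) = ((1-t²)²/(2t²)) A(s) + (1-t²)(1 - s²/t²) B(s)`. -/
noncomputable def schwarzF (φ : ℂ → ℂ) (s t : ℝ) : ℝ≥0∞ :=
  ENNReal.ofReal ((1 - t ^ 2) ^ 2 / (2 * t ^ 2)) * schwarzA φ s
    + ENNReal.ofReal ((1 - t ^ 2) * (1 - s ^ 2 / t ^ 2)) * schwarzB φ s

/-- `N(φ) = sup_{0 < s < t < 1} F(s,t)`. -/
noncomputable def schwarzN (φ : ℂ → ℂ) : ℝ≥0∞ :=
  ⨆ (s : ℝ) (t : ℝ) (_ : 0 < s) (_ : s < t) (_ : t < 1), schwarzF φ s t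


lemma mobius_den_ne_zero {c z : ℂ} (hc : ‖c‖ < 1) (hz : ‖z‖ ≤ 1) :
    1 - (starRingEnd ℂ) c * z ≠ 0 := by
  intro h
  have h1 : (1:ℂ) = (starRingEnd ℂ) c * z := by linear_combination h
  have : (1:ℝ) = ‖(starRingEnd ℂ) c * z‖ := by
    rw [← h1]; simp
  rw [norm_mul, Complex.norm_conj] at this
  nlinarith [norm_nonneg c, norm_nonneg z]

lemma mobius_key {c z : ℂ} :
    Complex.normSq (1 - (starRingEnd ℂ) c * z) - Complex.normSq (c - z)
      = (1 - Complex.normSq c) * (1 - Complex.normSq z) := by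
  simp only [Complex.normSq_apply, Complex.sub_re, Complex.sub_im, Complex.mul_re, Complex.mul_im,
    Complex.conj_re, Complex.conj_im, Complex.one_re, Complex.one_im]
  ring

lemma mobius_lt_one {c z : ℂ} (hc : ‖c‖ < 1) (hz : ‖z‖ < 1) :
    ‖(c - z) / (1 - (starRingEnd ℂ) c * z)‖ < 1 := by
  have hd := mobius_den_ne_zero hc hz.le
  have hdpos : 0 < ‖1 - (starRingEnd ℂ) c * z‖ := by
    simpa [norm_pos_iff] using hd
  rw [norm_div, div_lt_one hdpos]
  have h1 : Complex.normSq (c - z) < Complex.normSq (1 - (starRingEnd ℂ) c * z) := by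
    have hc2 : Complex.normSq c < 1 := by rw [← Complex.sq_norm] at *; nlinarith [norm_nonneg c]
    have hz2 : Complex.normSq z < 1 := by rw [← Complex.sq_norm] at *; nlinarith [norm_nonneg z]
    nlinarith [mobius_key (c := c) (z := z)]
  have := Real.sqrt_lt_sqrt (Complex.normSq_nonneg _) h1
  simpa [Complex.norm_def] using this

lemma mobius_hasDerivAt {c z : ℂ} (hd : 1 - (starRingEnd ℂ) c * z ≠ 0) :
    HasDerivAt (fun w => (c - w) / (1 - (starRingEnd ℂ) c * w))
      ((Complex.normSq c - 1) / (1 - (starRingEnd ℂ) c * z) ^ 2) z := by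
  have h1 : HasDerivAt (fun w : ℂ => c - w) (-1) z := (hasDerivAt_id z).const_sub c
  have h2 : HasDerivAt (fun w : ℂ => 1 - (starRingEnd ℂ) c * w) (-(starRingEnd ℂ) c) z := by
    simpa using ((hasDerivAt_id z).const_mul ((starRingEnd ℂ) c)).const_sub 1
  have := h1.div h2 hd
  refine this.congr_deriv ?_
  have hns : ((Complex.normSq c : ℂ)) = (starRingEnd ℂ) c * c := (Complex.normSq_eq_conj_mul_self).symm ▸ rfl
  rw [hns]; ring

lemma schwarz_pick {ψ : ℂ → ℂ} (hψ : DifferentiableOn ℂ ψ (ball (0:ℂ) 1))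
    (hble : ∀ z ∈ ball (0:ℂ) 1, ‖ψ z‖ ≤ 1) {z₀ : ℂ} (hz₀ : z₀ ∈ ball (0:ℂ) 1) :
    ‖deriv ψ z₀‖ * (1 - ‖z₀‖ ^ 2) ≤ 1 - ‖ψ z₀‖ ^ 2 := by
  by_cases hcon : ∀ z ∈ ball (0:ℂ) 1, ψ z = ψ z₀
  · have hev : ψ =ᶠ[nhds z₀] (fun _ => ψ z₀) := by
      filter_upwards [isOpen_ball.mem_nhds hz₀] with x hx using hcon x hx
    have hd0 : deriv ψ z₀ = 0 := by rw [hev.deriv_eq]; simp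
    rw [hd0]
    have := hble z₀ hz₀
    have h0 := norm_nonneg (ψ z₀)
    simp only [norm_zero, zero_mul]
    nlinarith
  · have hlt : ∀ z ∈ ball (0:ℂ) 1, ‖ψ z‖ < 1 := by
      intro z hz
      rcases lt_or_eq_of_le (hble z hz) with h | h
      · exact h
      · exfalso
        have hmax : IsMaxOn (norm ∘ ψ) (ball (0:ℂ) 1) z := by
          intro y hy
          simp only [Function.comp_apply, Set.mem_setOf_eq]
          rw [h]; exact hble y hy
        have heq := Complex.eqOn_of_isPreconnected_of_isMaxOn_norm
          (convex_ball (0:ℂ) 1).isPreconnected isOpen_ball hψ hz hmax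
        exact hcon fun y hy => (heq hy).trans (heq hz₀).symm
    set a := ψ z₀ with ha_def
    set b := z₀ with hb_def
    have ha : ‖a‖ < 1 := hlt z₀ hz₀
    have hb : ‖b‖ < 1 := by simpa [Complex.norm_def, mem_ball_zero_iff] using hz₀
    set Ma : ℂ → ℂ := fun x => (a - x) / (1 - (starRingEnd ℂ) a * x) with hMa_def
    set Mb : ℂ → ℂ := fun x => (b - x) / (1 - (starRingEnd ℂ) b * x) with hMb_def
    set g : ℂ → ℂ := fun w => Ma (ψ (Mb w)) with hg_def
    have hMbmem : ∀ w ∈ ball (0:ℂ) 1, Mb w ∈ ball (0:ℂ) 1 := by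
      intro w hw
      rw [mem_ball_zero_iff]
      exact_mod_cast mobius_lt_one hb (by simpa [Complex.norm_def, mem_ball_zero_iff] using hw)
    have hgd : DifferentiableOn ℂ g (ball (0:ℂ) 1) := by
      intro w hw
      have hw1 : ‖w‖ < 1 := by simpa [Complex.norm_def, mem_ball_zero_iff] using hw
      have d1 : DifferentiableAt ℂ Mb w := (mobius_hasDerivAt (mobius_den_ne_zero hb hw1.le)).differentiableAt
      have d2 : DifferentiableAt ℂ ψ (Mb w) := hψ.differentiableAt (isOpen_ball.mem_nhds (hMbmem w hw))
      have d3 : DifferentiableAt ℂ Ma (ψ (Mb w)) :=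
        (mobius_hasDerivAt (mobius_den_ne_zero ha (hlt _ (hMbmem w hw)).le)).differentiableAt
      exact ((d3.comp _ d2).comp _ d1).differentiableWithinAt
    have hMb0 : Mb 0 = b := by simp [hMb_def]
    have hg0 : g 0 = 0 := by simp [hg_def, hMb0, ← ha_def, hMa_def]
    have hmaps : Set.MapsTo g (ball (0:ℂ) 1) (ball (g 0) 1) := by
      rw [hg0]
      intro w hw
      rw [mem_ball_zero_iff]
      exact_mod_cast mobius_lt_one ha (hlt _ (hMbmem w hw))
    have hS := Complex.norm_deriv_le_div_of_mapsTo_ball hgd (hmaps.mono_right ball_subset_closedBall) one_pos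
    -- compute deriv g 0
    have hda : 1 - (starRingEnd ℂ) a * a ≠ 0 := mobius_den_ne_zero ha ha.le
    have hMaD : HasDerivAt Ma ((Complex.normSq a - 1) / (1 - (starRingEnd ℂ) a * a) ^ 2) a :=
      mobius_hasDerivAt hda
    have hψD : HasDerivAt ψ (deriv ψ b) b :=
      (hψ.differentiableAt (isOpen_ball.mem_nhds hz₀)).hasDerivAt
    have hMbD : HasDerivAt Mb (Complex.normSq b - 1) 0 := by
      have := mobius_hasDerivAt (c := b) (z := 0) (by simpa using mobius_den_ne_zero hb (by norm_num : ‖(0:ℂ)‖ ≤ 1))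
      simpa using this
    have hcomp : HasDerivAt g
        (((Complex.normSq a - 1) / (1 - (starRingEnd ℂ) a * a) ^ 2) * deriv ψ b * (Complex.normSq b - 1)) 0 := by
      have h1 : HasDerivAt (fun w => Ma (ψ w)) (((Complex.normSq a - 1) / (1 - (starRingEnd ℂ) a * a) ^ 2) * deriv ψ b) b := by
        have := hMaD.comp b hψD
        exact this
      rw [← hMb0] at h1
      have h2 := h1.comp 0 hMbD
      rw [hMb0] at h2
      exact h2
    rw [hcomp.deriv] at hS
    -- now turn hS into the goal
    have hnsa : Complex.normSq a < 1 := by rw [← Complex.sq_norm] at *; nlinarith [norm_nonneg a]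
    have hnsb : Complex.normSq b < 1 := by rw [← Complex.sq_norm] at *; nlinarith [norm_nonneg b]
    have hden : (1 : ℂ) - (starRingEnd ℂ) a * a = ((1 - Complex.normSq a : ℝ) : ℂ) := by
      rw [← Complex.normSq_eq_conj_mul_self]; push_cast; ring
    have hpa : (0:ℝ) < 1 - Complex.normSq a := by
      rw [← Complex.sq_norm]; nlinarith [norm_nonneg a]
    have habs : ‖((Complex.normSq a - 1) / (1 - (starRingEnd ℂ) a * a) ^ 2) * deriv ψ b * (Complex.normSq b - 1)‖
        = (1 - Complex.normSq a)⁻¹ * ‖deriv ψ b‖ * (1 - Complex.normSq b) := by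
      have e1 : ‖(Complex.normSq a : ℂ) - 1‖ = 1 - Complex.normSq a := by
        rw [show (Complex.normSq a : ℂ) - 1 = ((Complex.normSq a - 1 : ℝ) : ℂ) by push_cast; ring]
        rw [Complex.norm_real, Real.norm_eq_abs, abs_of_nonpos (by linarith)]; ring
      have e2 : ‖(Complex.normSq b : ℂ) - 1‖ = 1 - Complex.normSq b := by
        rw [show (Complex.normSq b : ℂ) - 1 = ((Complex.normSq b - 1 : ℝ) : ℂ) by push_cast; ring]
        rw [Complex.norm_real, Real.norm_eq_abs, abs_of_nonpos (by linarith)]; ring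
      rw [hden, norm_mul, norm_mul, norm_div, norm_pow, Complex.norm_real, Real.norm_eq_abs,
        _root_.abs_of_nonneg (by linarith : (0:ℝ) ≤ 1 - Complex.normSq a), e1, e2]
      field_simp
    rw [habs] at hS
    norm_num at hS
    rw [mul_assoc, inv_mul_le_iff₀ hpa] at hS
    rw [show ‖b‖ ^ 2 = Complex.normSq b from Complex.sq_norm b,
      show ‖a‖ ^ 2 = Complex.normSq a from Complex.sq_norm a]
    linarith [hS]

lemma schwarzian_identity (φ ω f : ℂ → ℂ)
    (hφ : DifferentiableOn ℂ φ (ball (0:ℂ) 1))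
    (hf : DifferentiableOn ℂ f (ball (0:ℂ) 1))
    (hω : DifferentiableOn ℂ ω (ball (0:ℂ) 1))
    (hωmap : ∀ z ∈ ball (0:ℂ) 1, ω z ∈ ball (0:ℂ) 1)
    (hf' : ∀ z ∈ ball (0:ℂ) 1, deriv f z ≠ 0)
    (hsub : ∀ z ∈ ball (0:ℂ) 1, 1 + z * deriv (deriv f) z / deriv f z = φ (ω z))
    {z : ℂ} (hz : z ∈ ball (0:ℂ) 1) (hz0 : z ≠ 0) :
    deriv (deriv (deriv f)) z / deriv f z - (3/2) * (deriv (deriv f) z / deriv f z)^2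
      = (1/z^2) * ((1/2) * (2 * ω z * deriv φ (ω z) + 1 - φ (ω z)^2)
          + (z * deriv ω z - ω z) * deriv φ (ω z)) := by
  have hfa : AnalyticOnNhd ℂ f (ball (0:ℂ) 1) := hf.analyticOnNhd isOpen_ball
  have h1 : ∀ y ∈ ball (0:ℂ) 1,
      y * deriv (deriv f) y = (φ (ω y) - 1) * deriv f y := by
    intro y hy
    have h := hsub y hy
    field_simp [hf' y hy] at h
    linear_combination h
  -- derivative of both sides
  have hq : HasDerivAt (deriv f) (deriv (deriv f) z) z :=
    ((hfa.deriv) z hz).differentiableAt.hasDerivAt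
  have hr : HasDerivAt (deriv (deriv f)) (deriv (deriv (deriv f)) z) z :=
    ((hfa.deriv.deriv) z hz).differentiableAt.hasDerivAt
  have hωd : HasDerivAt ω (deriv ω z) z :=
    (hω.differentiableAt (isOpen_ball.mem_nhds hz)).hasDerivAt
  have hφd : HasDerivAt φ (deriv φ (ω z)) (ω z) :=
    (hφ.differentiableAt (isOpen_ball.mem_nhds (hωmap z hz))).hasDerivAt
  have hu : HasDerivAt (fun y => y * deriv (deriv f) y)
      (deriv (deriv f) z + z * deriv (deriv (deriv f)) z) z := by
    exact ((hasDerivAt_id' z).mul hr).congr_deriv (by ring)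
  have hv : HasDerivAt (fun y => (φ (ω y) - 1) * deriv f y)
      ((deriv φ (ω z) * deriv ω z) * deriv f z + (φ (ω z) - 1) * deriv (deriv f) z) z := by
    have hc : HasDerivAt (fun y => φ (ω y) - 1) (deriv φ (ω z) * deriv ω z) z :=
      ((hφd.comp z hωd)).sub_const 1
    exact hc.mul hq
  have huv : (fun y => y * deriv (deriv f) y) =ᶠ[nhds z] (fun y => (φ (ω y) - 1) * deriv f y) := by
    filter_upwards [isOpen_ball.mem_nhds hz] with y hy using h1 y hy
  have h2 : deriv (deriv f) z + z * deriv (deriv (deriv f)) z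
      = (deriv φ (ω z) * deriv ω z) * deriv f z + (φ (ω z) - 1) * deriv (deriv f) z := by
    have hu' : HasDerivAt (fun y => (φ (ω y) - 1) * deriv f y)
        (deriv (deriv f) z + z * deriv (deriv (deriv f)) z) z := hu.congr_of_eventuallyEq huv.symm
    exact hu'.unique hv
  -- algebra
  set p := deriv f z
  set q := deriv (deriv f) z
  set r := deriv (deriv (deriv f)) z
  set P := φ (ω z)
  set D := deriv φ (ω z)
  set W := ω z
  set O := deriv ω z
  have hp : p ≠ 0 := hf' z hz
  have h1z : z * q = (P - 1) * p := h1 z hz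
  have hqe : q = (P - 1) * p / z := by field_simp [hz0]; linear_combination h1z
  have hre : r = ((D * O) * p + (P - 2) * q) / z := by
    field_simp [hz0]; linear_combination h2
  rw [hre, hqe]
  field_simp
  ring

lemma lim_step (φ : ℂ → ℂ) (hφ : DifferentiableOn ℂ φ (ball (0:ℂ) 1))
    {w : ℂ} {t : ℝ} (hst : ‖w‖ ≤ t) (ht0 : 0 < t) (ht1 : t < 1) :
    ENNReal.ofReal ((1 - t^2)^2 / (2*t^2) * ‖2*w*deriv φ w + 1 - φ w^2‖
      + (1 - t^2) * (1 - (‖w‖)^2 / t^2) * ‖deriv φ w‖) ≤ schwarzN φ := by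
  have hφa : AnalyticOnNhd ℂ φ (ball (0:ℂ) 1) := hφ.analyticOnNhd isOpen_ball
  set s := ‖w‖ with hs_def
  have hs0 : 0 ≤ s := norm_nonneg w
  set v : ℂ := if s = 0 then 1 else w / (s : ℂ) with hv_def
  have hv : ‖v‖ = 1 := by
    rw [hv_def]
    split_ifs with h
    · simp
    · rw [norm_div, Complex.norm_real, Real.norm_eq_abs, _root_.abs_of_nonneg hs0, ← hs_def]
      field_simp [h]
  have hsv : (s : ℂ) * v = w := by
    rw [hv_def]
    split_ifs with h
    · have : w = 0 := norm_eq_zero.mp (by rw [← hs_def]; exact h)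
      simp [this, h]
    · have hsne : (s : ℂ) ≠ 0 := by exact_mod_cast h
      field_simp
  have habs : ∀ σ : ℝ, 0 ≤ σ → ‖(σ:ℂ) * v‖ = σ := by
    intro σ hσ
    rw [norm_mul, hv, Complex.norm_real, Real.norm_eq_abs, _root_.abs_of_nonneg hσ, mul_one]
  -- the function G
  set G : ℝ → ℝ≥0∞ := fun σ => ENNReal.ofReal
    ((1 - t^2)^2 / (2*t^2) * ‖2*((σ:ℂ)*v)*deriv φ ((σ:ℂ)*v) + 1 - φ ((σ:ℂ)*v)^2‖
      + (1 - t^2) * (1 - σ^2 / t^2) * ‖deriv φ ((σ:ℂ)*v)‖) with hG_def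
  have hGs : G s = ENNReal.ofReal ((1 - t^2)^2 / (2*t^2) * ‖2*w*deriv φ w + 1 - φ w^2‖
      + (1 - t^2) * (1 - s^2 / t^2) * ‖deriv φ w‖) := by
    rw [hG_def]; simp only [hsv]
  have hGle : ∀ σ ∈ Set.Ioo (0:ℝ) t, G σ ≤ schwarzN φ := by
    intro σ hσ
    obtain ⟨hσ0, hσt⟩ := hσ
    have hmem : ((σ:ℂ)*v) ∈ {z : ℂ | ‖z‖ = σ} := habs σ hσ0.le
    have hA : ENNReal.ofReal (‖2*((σ:ℂ)*v)*deriv φ ((σ:ℂ)*v) + 1 - φ ((σ:ℂ)*v)^2‖)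
        ≤ schwarzA φ σ := by
      exact le_iSup₂ (f := fun z (_ : z ∈ {z : ℂ | ‖z‖ = σ}) =>
        ENNReal.ofReal (‖2 * z * deriv φ z + 1 - φ z ^ 2‖)) ((σ:ℂ)*v) hmem
    have hB : ENNReal.ofReal (‖deriv φ ((σ:ℂ)*v)‖) ≤ schwarzB φ σ := by
      exact le_iSup₂ (f := fun z (_ : z ∈ {z : ℂ | ‖z‖ = σ}) =>
        ENNReal.ofReal (‖deriv φ z‖)) ((σ:ℂ)*v) hmem
    have hc1 : (0:ℝ) ≤ (1 - t^2)^2 / (2*t^2) := by positivity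
    have hc2 : (0:ℝ) ≤ (1 - t^2) * (1 - σ^2 / t^2) := by
      have h1 : (0:ℝ) ≤ 1 - t^2 := by nlinarith
      have h2 : (0:ℝ) ≤ 1 - σ^2 / t^2 := by
        rw [sub_nonneg, div_le_one (by positivity)]
        nlinarith
      positivity
    have step1 : G σ ≤ schwarzF φ σ t := by
      rw [hG_def]
      simp only []
      rw [ENNReal.ofReal_add (by positivity) (by positivity)]
      unfold schwarzF
      gcongr
      · rw [ENNReal.ofReal_mul hc1]
        exact mul_le_mul_right hA _
      · rw [ENNReal.ofReal_mul hc2]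
        exact mul_le_mul_right hB _
    refine step1.trans ?_
    unfold schwarzN
    exact le_iSup_of_le σ (le_iSup_of_le t (le_iSup_of_le hσ0 (le_iSup_of_le hσt
      (le_iSup_of_le ht1 le_rfl))))
  -- continuity
  have hmem_ball : ∀ σ : ℝ, 0 ≤ σ → σ < 1 → ((σ:ℂ)*v) ∈ ball (0:ℂ) 1 := by
    intro σ h0 h1
    rw [mem_ball_zero_iff, habs σ h0]
    exact h1
  have hsball : ((s:ℂ)*v) ∈ ball (0:ℂ) 1 := hmem_ball s hs0 (lt_of_le_of_lt hst ht1)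
  have hcm : ContinuousAt (fun σ : ℝ => ((σ:ℂ)*v)) s :=
    (Complex.continuous_ofReal.mul continuous_const).continuousAt
  have hcφ : ContinuousAt φ ((s:ℂ)*v) := ((hφa ((s:ℂ)*v) hsball)).continuousAt
  have hcφ' : ContinuousAt (deriv φ) ((s:ℂ)*v) := ((hφa.deriv ((s:ℂ)*v) hsball)).continuousAt
  have hd1 : ContinuousAt (fun σ : ℝ => deriv φ ((σ:ℂ)*v)) s := ContinuousAt.comp (f := fun σ : ℝ => ((σ:ℂ)*v)) (x := s) hcφ' hcm
  have hd2 : ContinuousAt (fun σ : ℝ => φ ((σ:ℂ)*v)) s := ContinuousAt.comp (x := s) hcφ hcm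
  have hGcont : ContinuousAt G s := by
    rw [hG_def]
    apply ENNReal.continuous_ofReal.continuousAt.comp
    apply ContinuousAt.add
    · apply ContinuousAt.mul continuousAt_const
      apply continuous_norm.continuousAt.comp
      exact (((continuousAt_const.mul hcm).mul hd1).add continuousAt_const).sub (hd2.pow 2)
    · apply ContinuousAt.mul
      · exact continuousAt_const.mul ((continuousAt_const.sub
          ((continuousAt_id.pow 2).div continuousAt_const (by positivity))))
      · exact continuous_norm.continuousAt.comp hd1
  have hclos : s ∈ closure (Set.Ioo (0:ℝ) t) := by
    rw [closure_Ioo ht0.ne]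
    exact ⟨hs0, hst⟩
  have hne : (nhdsWithin s (Set.Ioo (0:ℝ) t)).NeBot :=
    mem_closure_iff_nhdsWithin_neBot.mp hclos
  have htend : Filter.Tendsto G (nhdsWithin s (Set.Ioo (0:ℝ) t)) (nhds (G s)) :=
    (hGcont.continuousWithinAt).tendsto
  rw [← hGs]
  exact le_of_tendsto htend (Filter.eventually_iff_exists_mem.mpr
    ⟨Set.Ioo 0 t, self_mem_nhdsWithin, hGle⟩)

/-- General Schwarzian norm estimate for the Ma–Minda class `K(φ)`:
if `1 + z f''/f'` is subordinate to `φ`, then `(1-|z|²)² |S_f(z)| ≤ N(φ)` on the disk. -/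
theorem schwarzian_norm_le_of_MaMinda_convex (φ : ℂ → ℂ)
    (hφ : DifferentiableOn ℂ φ (ball (0:ℂ) 1)) (hφ0 : φ 0 = 1)
    (f : ℂ → ℂ) (hf : DifferentiableOn ℂ f (ball (0:ℂ) 1))
    (hf0 : f 0 = 0) (hf1 : deriv f 0 = 1)
    (hf' : ∀ z ∈ ball (0:ℂ) 1, deriv f z ≠ 0)
    (ω : ℂ → ℂ) (hω : DifferentiableOn ℂ ω (ball (0:ℂ) 1))
    (hωmap : ∀ z ∈ ball (0:ℂ) 1, ω z ∈ ball (0:ℂ) 1) (hω0 : ω 0 = 0)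
    (hsub : ∀ z ∈ ball (0:ℂ) 1,
      1 + z * deriv (deriv f) z / deriv f z = φ (ω z)) :
    ∀ z ∈ ball (0:ℂ) 1,
      ENNReal.ofReal ((1 - ‖z‖ ^ 2) ^ 2 *
        ‖deriv (deriv (deriv f)) z / deriv f z
          - (3 / 2) * (deriv (deriv f) z / deriv f z) ^ 2‖) ≤ schwarzN φ := by
  have hfa : AnalyticOnNhd ℂ f (ball (0:ℂ) 1) := hf.analyticOnNhd isOpen_ball
  have key : ∀ z ∈ ball (0:ℂ) 1, z ≠ 0 →
      ENNReal.ofReal ((1 - ‖z‖ ^ 2) ^ 2 *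
        ‖deriv (deriv (deriv f)) z / deriv f z
          - (3 / 2) * (deriv (deriv f) z / deriv f z) ^ 2‖) ≤ schwarzN φ := by
    intro z hz hz0
    set t := ‖z‖ with ht_def
    have ht0 : 0 < t := norm_pos_iff.mpr hz0
    have ht1 : t < 1 := by rwa [mem_ball_zero_iff] at hz
    have ht2 : (0:ℝ) < 1 - t^2 := by nlinarith
    set w := ω z with hw_def
    set s := ‖w‖ with hs_def
    -- dslope facts
    have hψd : DifferentiableOn ℂ (dslope ω 0) (ball (0:ℂ) 1) :=
      (Complex.differentiableOn_dslope (ball_mem_nhds _ one_pos)).mpr hω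
    have hmapsω : Set.MapsTo ω (ball (0:ℂ) 1) (ball (ω 0) 1) := by
      rw [hω0]; intro y hy; exact hωmap y hy
    have hψle : ∀ y ∈ ball (0:ℂ) 1, ‖dslope ω 0 y‖ ≤ 1 := by
      intro y hy
      have := Complex.norm_dslope_le_div_of_mapsTo_ball hω (hmapsω.mono_right ball_subset_closedBall) hy
      simpa using this
    have hSP := schwarz_pick hψd hψle hz
    have hψz : dslope ω 0 z = w / z := by
      rw [dslope_of_ne _ hz0, slope_def_field, hω0]; rw [hw_def]; ring
    have hst : s ≤ t := by
      have h1 := hψle z hz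
      rw [hψz, norm_div, ← hs_def, ← ht_def, div_le_one ht0] at h1
      exact h1
    have hωd : HasDerivAt ω (deriv ω z) z :=
      (hω.differentiableAt (isOpen_ball.mem_nhds hz)).hasDerivAt
    have hψderiv : deriv (dslope ω 0) z = (z * deriv ω z - ω z) / z^2 := by
      have hev : dslope ω 0 =ᶠ[nhds z] (fun y => ω y / y) := by
        filter_upwards [isOpen_ne.mem_nhds hz0] with y hy
        rw [dslope_of_ne _ hy, slope_def_field, hω0]; ring
      rw [hev.deriv_eq]
      have hd : HasDerivAt (fun y => ω y / y) ((deriv ω z * z - ω z * 1) / z^2) z :=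
        hωd.div (hasDerivAt_id z) hz0
      rw [hd.deriv]; ring_nf
    have hψzabs : ‖dslope ω 0 z‖ = s / t := by
      rw [hψz, norm_div, ← hs_def, ← ht_def]
    have habs1 : ‖z * deriv ω z - ω z‖ * (1 - t^2) ≤ t^2 - s^2 := by
      have e : ‖z * deriv ω z - ω z‖ = ‖deriv (dslope ω 0) z‖ * t^2 := by
        rw [hψderiv, norm_div, norm_pow, ← ht_def]
        field_simp
      rw [e]
      rw [hψzabs] at hSP
      have h2 : (s/t)^2 = s^2/t^2 := by ring
      rw [h2] at hSP
      have := mul_le_mul_of_nonneg_left hSP (le_of_lt (by positivity : (0:ℝ) < t^2))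
      calc ‖deriv (dslope ω 0) z‖ * t ^ 2 * (1 - t ^ 2)
          = t^2 * (‖deriv (dslope ω 0) z‖ * (1 - t ^ 2)) := by ring
        _ ≤ t^2 * (1 - s^2/t^2) := this
        _ = t^2 - s^2 := by field_simp
    have habs2 : ‖z * deriv ω z - ω z‖ ≤ (t^2 - s^2) / (1 - t^2) := by
      rw [le_div_iff₀ ht2]
      exact habs1
    have SI := schwarzian_identity φ ω f hφ hf hω hωmap hf' hsub hz hz0
    set X := (1/2 : ℂ) * (2 * ω z * deriv φ (ω z) + 1 - φ (ω z)^2)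
      + (z * deriv ω z - ω z) * deriv φ (ω z) with hX_def
    have hSabs : ‖deriv (deriv (deriv f)) z / deriv f z
        - (3 / 2) * (deriv (deriv f) z / deriv f z) ^ 2‖ = ‖X‖ / t^2 := by
      rw [SI, norm_mul, norm_div, norm_one, norm_pow, ← ht_def]
      ring
    have hXle : ‖X‖ ≤ 1/2 * ‖2 * w * deriv φ w + 1 - φ w^2‖
        + (t^2 - s^2)/(1 - t^2) * ‖deriv φ w‖ := by
      rw [hX_def]
      refine (norm_add_le _ _).trans ?_
      rw [norm_mul, norm_mul]
      have h12 : ‖(1/2 : ℂ)‖ = 1/2 := by norm_num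
      rw [h12]
      gcongr
    refine (ENNReal.ofReal_le_ofReal ?_).trans (lim_step φ hφ hst ht0 ht1)
    rw [hSabs]
    have hcoef : (1 - t^2) * (1 - s^2/t^2) = (1 - t^2)^2/t^2 * ((t^2 - s^2)/(1 - t^2)) := by
      field_simp
    calc (1 - t^2)^2 * (‖X‖ / t^2)
        = (1 - t^2)^2/t^2 * ‖X‖ := by ring
      _ ≤ (1 - t^2)^2/t^2 * (1/2 * ‖2 * w * deriv φ w + 1 - φ w^2‖
          + (t^2 - s^2)/(1 - t^2) * ‖deriv φ w‖) := by
          gcongr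
      _ = (1 - t^2)^2/(2*t^2) * ‖2 * w * deriv φ w + 1 - φ w^2‖
          + (1 - t^2) * (1 - s^2/t^2) * ‖deriv φ w‖ := by
          rw [hcoef]; try ring
  intro z hz
  by_cases hz0 : z = 0
  · subst hz0
    set L : ℂ → ℝ := fun y => (1 - ‖y‖ ^ 2) ^ 2 *
        ‖deriv (deriv (deriv f)) y / deriv f y
          - (3 / 2) * (deriv (deriv f) y / deriv f y) ^ 2‖ with hL_def
    have hc1 : ContinuousAt (deriv f) 0 := ((hfa.deriv) 0 hz).continuousAt
    have hc2 : ContinuousAt (deriv (deriv f)) 0 := ((hfa.deriv.deriv) 0 hz).continuousAt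
    have hc3 : ContinuousAt (deriv (deriv (deriv f))) 0 :=
      ((hfa.deriv.deriv.deriv) 0 hz).continuousAt
    have hne : deriv f 0 ≠ 0 := hf' 0 hz
    have hcL : ContinuousAt L 0 := by
      rw [hL_def]
      apply ContinuousAt.mul
      · exact ((continuousAt_const.sub ((continuous_norm.continuousAt).pow 2)).pow 2)
      · exact continuous_norm.continuousAt.comp
          ((hc3.div hc1 hne).sub (continuousAt_const.mul ((hc2.div hc1 hne).pow 2)))
    have hev : ∀ᶠ y in nhdsWithin (0:ℂ) {(0:ℂ)}ᶜ, ENNReal.ofReal (L y) ≤ schwarzN φ := by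
      filter_upwards [self_mem_nhdsWithin,
        mem_nhdsWithin_of_mem_nhds (isOpen_ball.mem_nhds hz)] with y hy1 hy2
      exact key y hy2 hy1
    have htend : Filter.Tendsto (fun y => ENNReal.ofReal (L y))
        (nhdsWithin (0:ℂ) {(0:ℂ)}ᶜ) (nhds (ENNReal.ofReal (L 0))) :=
      ((ENNReal.continuous_ofReal.continuousAt.comp hcL)).continuousWithinAt.tendsto
    exact le_of_tendsto htend hev
  · exact key z hz hz0
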